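/- For every locally integrable f on ℝⁿ, every γ ∈ (0,n), and every t > 0, the non-increasing rearrangement of the fractional maximal function satisfies (M_γ f)*(t) ≤ C sup_{t ≤ τ < ∞} τ^{γ/n − 1} ∫₀^τ f*(y) dy, with C depending only on n and γ. -/

import Mathlib

open MeasureTheory Set
open scoped ENNReal

/-- The axis-parallel cube with lower corner `a` and side length `h` in `ℝⁿ`. -/
def cube17 (n : ℕ) (a : Fin n → ℝ) (h : ℝ) : Set (Fin n → ℝ) :=
  univ.pi fun i => Icc (a i) (a i + h)

/-- The fractional maximal operator
`M_γ f(x) = sup_{Q ∋ x} |Q|^{γ/n-1} ∫_Q f`, the supremum being over axis-parallel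
cubes `Q` containing `x`. -/
noncomputable def fracMax17 (n : ℕ) (γ : ℝ) (f : (Fin n → ℝ) → ℝ≥0∞)
    (x : Fin n → ℝ) : ℝ≥0∞ :=
  ⨆ (a : Fin n → ℝ) (h : ℝ) (_ : 0 < h ∧ x ∈ cube17 n a h),
    (ENNReal.ofReal h ^ (n : ℝ)) ^ (γ / n - 1) * ∫⁻ y in cube17 n a h, f y

/-- The non-increasing rearrangement
`g*(t) = inf {λ : |{x : g(x) > λ}| ≤ t}` of `g : ℝⁿ → [0,∞]`. -/
noncomputable def rearr17 (n : ℕ) (g : (Fin n → ℝ) → ℝ≥0∞) (t : ℝ) : ℝ≥0∞ :=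
  sInf {l : ℝ≥0∞ | volume {x | l < g x} ≤ ENNReal.ofReal t}


/-- Layer cake formula for `ℝ≥0∞`-valued functions. -/
lemma layercake17 {α : Type*} [MeasurableSpace α] (μ : Measure α) [SFinite μ]
    {f : α → ℝ≥0∞} (hf : Measurable f) :
    ∫⁻ x, f x ∂μ = ∫⁻ t in Ioi (0:ℝ), μ {x | ENNReal.ofReal t < f x} := by
  have mble : ∀ c : ℝ≥0∞, MeasurableSet {t : ℝ | ENNReal.ofReal t < c} :=
    fun c => measurableSet_lt ENNReal.measurable_ofReal measurable_const
  have key : ∀ c : ℝ≥0∞, (volume.restrict (Ioi (0:ℝ))) {t : ℝ | ENNReal.ofReal t < c} = c := by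
    intro c
    rw [Measure.restrict_apply (mble c)]
    rcases eq_or_ne c ⊤ with rfl | hc
    · have h1 : {t : ℝ | ENNReal.ofReal t < ⊤} ∩ Ioi 0 = Ioi 0 := by
        ext t; simp [ENNReal.ofReal_lt_top]
      rw [h1, Real.volume_Ioi]
    · have h1 : {t : ℝ | ENNReal.ofReal t < c} ∩ Ioi 0 = Ioo 0 c.toReal := by
        ext t
        simp only [mem_inter_iff, mem_setOf_eq, mem_Ioi, mem_Ioo]
        constructor
        · rintro ⟨h1, h2⟩; exact ⟨h2, (ENNReal.ofReal_lt_iff_lt_toReal h2.le hc).1 h1⟩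
        · rintro ⟨h2, h1⟩; exact ⟨(ENNReal.ofReal_lt_iff_lt_toReal h2.le hc).2 h1, h2⟩
      rw [h1, Real.volume_Ioo, sub_zero, ENNReal.ofReal_toReal hc]
  have hSm : MeasurableSet {p : α × ℝ | ENNReal.ofReal p.2 < f p.1} :=
    measurableSet_lt (ENNReal.measurable_ofReal.comp measurable_snd) (hf.comp measurable_fst)
  calc ∫⁻ x, f x ∂μ
      = ∫⁻ x, ∫⁻ t, ({p : α × ℝ | ENNReal.ofReal p.2 < f p.1}.indicator (fun _ => 1) (x, t))
          ∂(volume.restrict (Ioi (0:ℝ))) ∂μ := by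
        refine lintegral_congr fun x => ?_
        have h2 : (fun t : ℝ => ({p : α × ℝ | ENNReal.ofReal p.2 < f p.1}.indicator
            (fun _ => (1:ℝ≥0∞)) (x, t)))
            = fun t : ℝ => ({t : ℝ | ENNReal.ofReal t < f x}.indicator (fun _ => (1:ℝ≥0∞)) t) := by
          funext t
          by_cases h : ENNReal.ofReal t < f x <;> simp [Set.indicator, h]
        rw [h2, lintegral_indicator_const (mble (f x)) 1, one_mul, key (f x)]
    _ = ∫⁻ t in Ioi (0:ℝ), ∫⁻ x, ({p : α × ℝ | ENNReal.ofReal p.2 < f p.1}.indicator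
          (fun _ => 1) (x, t)) ∂μ := by
        refine lintegral_lintegral_swap ?_
        exact ((measurable_indicator_const_iff 1).2 hSm).aemeasurable
    _ = ∫⁻ t in Ioi (0:ℝ), μ {x | ENNReal.ofReal t < f x} := by
        refine lintegral_congr fun t => ?_
        have h2 : (fun x : α => ({p : α × ℝ | ENNReal.ofReal p.2 < f p.1}.indicator
            (fun _ => (1:ℝ≥0∞)) (x, t)))
            = fun x : α => ({x : α | ENNReal.ofReal t < f x}.indicator (fun _ => (1:ℝ≥0∞)) x) := by
          funext x
          by_cases h : ENNReal.ofReal t < f x <;> simp [Set.indicator, h]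
        rw [h2, lintegral_indicator_const (measurableSet_lt measurable_const hf) 1, one_mul]


lemma rearr17_antitone (n : ℕ) (f : (Fin n → ℝ) → ℝ≥0∞) : Antitone (rearr17 n f) := by
  intro y₁ y₂ h
  exact sInf_le_sInf fun l hl => le_trans hl (ENNReal.ofReal_le_ofReal h)

lemma rearr17_measurable (n : ℕ) (f : (Fin n → ℝ) → ℝ≥0∞) : Measurable (rearr17 n f) :=
  (rearr17_antitone n f).measurable

/-- The distribution function of `f` at the value `f*(y)` is at most `y`. -/
lemma dist_rearr17_le (n : ℕ) (f : (Fin n → ℝ) → ℝ≥0∞) (y : ℝ) :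
    volume {x | rearr17 n f y < f x} ≤ ENNReal.ofReal y := by
  set S : Set ℝ≥0∞ := {l : ℝ≥0∞ | volume {x | l < f x} ≤ ENNReal.ofReal y} with hS
  have hne : (⊤ : ℝ≥0∞) ∈ S := by
    have : {x : Fin n → ℝ | (⊤:ℝ≥0∞) < f x} = ∅ := by
      ext x; simp [not_top_lt]
    simp [hS, this]
  set m : ℝ≥0∞ := sInf S with hm
  rcases eq_or_ne m ⊤ with htop | hfin
  · have : {x : Fin n → ℝ | rearr17 n f y < f x} = ∅ := by
      ext x
      simp only [mem_empty_iff_false, iff_false, mem_setOf_eq]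
      show ¬ (sInf _ < f x)
      rw [show sInf {l : ℝ≥0∞ | volume {x | l < f x} ≤ ENNReal.ofReal y} = m from rfl, htop]
      exact not_top_lt
    rw [show rearr17 n f y = m from rfl] at *
    simp [this]
  · have hmem : ∀ k : ℕ, volume {x | m + (k:ℝ≥0∞)⁻¹ < f x} ≤ ENNReal.ofReal y := by
      intro k
      rcases eq_or_ne (k:ℝ≥0∞)⁻¹ 0 with h0 | h0
      ·
        have : (k:ℝ≥0∞) ≠ ⊤ := ENNReal.natCast_ne_top k
        rw [ENNReal.inv_eq_zero] at h0
        exact absurd h0 this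
      · have hlt : m < m + (k:ℝ≥0∞)⁻¹ := ENNReal.lt_add_right hfin h0
        obtain ⟨l, hlS, hl⟩ := sInf_lt_iff.1 hlt
        exact le_trans (measure_mono fun x hx => lt_trans hl hx) hlS
    have hun : {x : Fin n → ℝ | m < f x} = ⋃ k : ℕ, {x | m + ((k:ℝ≥0∞))⁻¹ < f x} := by
      ext x
      simp only [mem_setOf_eq, mem_iUnion]
      constructor
      · intro hx
        obtain ⟨r, hr, hry⟩ := ENNReal.lt_iff_exists_add_pos_lt.1 hx
        obtain ⟨k, hk⟩ := ENNReal.exists_inv_nat_lt (a := (r:ℝ≥0∞)) (by exact_mod_cast hr.ne')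
        exact ⟨k, lt_of_le_of_lt (add_le_add_right hk.le m) hry⟩
      · rintro ⟨k, hk⟩
        exact lt_of_le_of_lt le_self_add hk
    have hmono : Monotone fun k : ℕ => {x : Fin n → ℝ | m + ((k:ℝ≥0∞))⁻¹ < f x} := by
      intro k j hkj x hx
      refine lt_of_le_of_lt (add_le_add_right ?_ m) hx
      exact ENNReal.inv_le_inv.2 (by exact_mod_cast hkj)
    calc volume {x | rearr17 n f y < f x} = volume {x : Fin n → ℝ | m < f x} := rfl
      _ = ⨆ k : ℕ, volume {x | m + ((k:ℝ≥0∞))⁻¹ < f x} := by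
          rw [hun]
          exact Directed.measure_iUnion hmono.directed_le
      _ ≤ ENNReal.ofReal y := iSup_le hmem

lemma rearr17_le_iff (n : ℕ) (f : (Fin n → ℝ) → ℝ≥0∞) (y : ℝ) (l : ℝ≥0∞) :
    rearr17 n f y ≤ l ↔ volume {x | l < f x} ≤ ENNReal.ofReal y := by
  constructor
  · intro h
    refine le_trans (measure_mono fun x hx => lt_of_le_of_lt h hx) (dist_rearr17_le n f y)
  · intro h
    exact sInf_le h

/-- Hardy–Littlewood: the integral of `f` over a set of measure `s` is at most
the integral of the rearrangement over `(0, s]`. -/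
lemma lemA17 (n : ℕ) {f : (Fin n → ℝ) → ℝ≥0∞} (hf : Measurable f)
    {U : Set (Fin n → ℝ)} (hU : MeasurableSet U) {s : ℝ} (hs : 0 < s)
    (hvol : volume U = ENNReal.ofReal s) :
    ∫⁻ x in U, f x ≤ ∫⁻ y in Ioc (0:ℝ) s, rearr17 n f y := by
  have h1 : ∫⁻ x in U, f x
      = ∫⁻ t in Ioi (0:ℝ), (volume.restrict U) {x | ENNReal.ofReal t < f x} :=
    layercake17 _ hf
  have h2 : ∫⁻ y in Ioc (0:ℝ) s, rearr17 n f y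
      = ∫⁻ t in Ioi (0:ℝ),
          (volume.restrict (Ioc (0:ℝ) s)) {y | ENNReal.ofReal t < rearr17 n f y} :=
    layercake17 _ (rearr17_measurable n f)
  rw [h1, h2]
  refine lintegral_mono fun t => ?_
  set c : ℝ≥0∞ := ENNReal.ofReal t with hc
  set D : ℝ≥0∞ := volume {x | c < f x} with hD
  have hsetr : {y : ℝ | c < rearr17 n f y} = {y : ℝ | ENNReal.ofReal y < D} := by
    ext y
    simp only [mem_setOf_eq]
    rw [← not_le, ← not_le]
    exact not_congr (rearr17_le_iff n f y c)
  have hLHS : (volume.restrict U) {x | c < f x} ≤ min (ENNReal.ofReal s) D := by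
    rw [Measure.restrict_apply (measurableSet_lt measurable_const hf)]
    exact le_min (le_of_le_of_eq (measure_mono inter_subset_right) hvol)
      (measure_mono inter_subset_left)
  refine le_trans hLHS (le_of_eq ?_)
  rw [Measure.restrict_apply' measurableSet_Ioc, hsetr]
  rcases lt_or_ge D (ENNReal.ofReal s) with hDs | hDs
  · have hDtop : D ≠ ⊤ := (lt_of_lt_of_le hDs le_top).ne
    have hT : D.toReal < s := by
      have := ENNReal.toReal_lt_toReal hDtop ENNReal.ofReal_ne_top |>.2 hDs
      rwa [ENNReal.toReal_ofReal hs.le] at this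
    have hset : {y : ℝ | ENNReal.ofReal y < D} ∩ Ioc 0 s = Ioo 0 D.toReal := by
      ext y
      simp only [mem_inter_iff, mem_setOf_eq, mem_Ioc, mem_Ioo]
      constructor
      · rintro ⟨h1', h2', _⟩
        exact ⟨h2', (ENNReal.ofReal_lt_iff_lt_toReal h2'.le hDtop).1 h1'⟩
      · rintro ⟨h2', h1'⟩
        exact ⟨(ENNReal.ofReal_lt_iff_lt_toReal h2'.le hDtop).2 h1', h2', (h1'.trans hT).le⟩
    rw [min_eq_right hDs.le, hset, Real.volume_Ioo, sub_zero, ENNReal.ofReal_toReal hDtop]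
  · rw [min_eq_left hDs]
    have hIoo : volume (Ioo (0:ℝ) s) = ENNReal.ofReal s := by
      rw [Real.volume_Ioo, sub_zero]
    have hIoc : volume (Ioc (0:ℝ) s) = ENNReal.ofReal s := by
      rw [Real.volume_Ioc, sub_zero]
    refine le_antisymm ?_ ?_
    · have hsub : Ioo 0 s ⊆ {y : ℝ | ENNReal.ofReal y < D} ∩ Ioc 0 s := by
        rintro y ⟨hy1, hy2⟩
        exact ⟨lt_of_lt_of_le ((ENNReal.ofReal_lt_ofReal_iff hs).2 hy2) hDs, hy1, hy2.le⟩
      exact le_trans hIoo.ge (measure_mono hsub)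
    · exact le_trans (measure_mono inter_subset_right) hIoc.le

lemma cube17_eq_closedBall (n : ℕ) (a : Fin n → ℝ) {h : ℝ} (hh : 0 ≤ h) :
    cube17 n a h = Metric.closedBall (fun i => a i + h/2) (h/2) := by
  rw [closedBall_pi _ (by linarith : (0:ℝ) ≤ h/2)]
  unfold cube17
  refine Set.pi_congr rfl fun i _ => ?_
  rw [Real.closedBall_eq_Icc]
  congr 1 <;> ring

lemma volume_cube17 (n : ℕ) (a : Fin n → ℝ) (h : ℝ) :
    volume (cube17 n a h) = ENNReal.ofReal h ^ n := by
  rw [cube17, volume_pi_pi]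
  simp [Real.volume_Icc]

lemma cube17_measurable (n : ℕ) (a : Fin n → ℝ) (h : ℝ) : MeasurableSet (cube17 n a h) :=
  MeasurableSet.univ_pi fun i => measurableSet_Icc

lemma volume_big_ball (n : ℕ) (c : Fin n → ℝ) {h : ℝ} (hh : 0 ≤ h) :
    volume (Metric.closedBall c (4 * (h/2))) = (4:ℝ≥0∞)^n * ENNReal.ofReal h ^ n := by
  rw [Real.volume_pi_closedBall c (by linarith : (0:ℝ) ≤ 4*(h/2))]
  have : (2 * (4 * (h/2))) = 4 * h := by ring
  rw [this, Fintype.card_fin, mul_pow, ENNReal.ofReal_mul (by positivity),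
    ENNReal.ofReal_pow hh, ENNReal.ofReal_pow (by norm_num : (0:ℝ) ≤ 4)]
  norm_num

lemma rpow_sum_le17 {ι : Type*} (F : Finset ι) (g : ι → ℝ≥0∞) {e : ℝ}
    (he0 : 0 < e) (he1 : e ≤ 1) : (∑ i ∈ F, g i) ^ e ≤ ∑ i ∈ F, (g i) ^ e := by
  classical
  induction F using Finset.cons_induction with
  | empty => simp [ENNReal.zero_rpow_of_pos he0]
  | cons a F ha ih =>
      rw [Finset.sum_cons, Finset.sum_cons]
      exact le_trans (ENNReal.rpow_add_le_add_rpow _ _ he0.le he1) (add_le_add_right ih _)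


/-- for every `n ≥ 1`, `γ ∈ (0,n)`, there is `C = C(n,γ)` such that for
every locally integrable `f ≥ 0` on `ℝⁿ` and every `t > 0`,
`(M_γ f)*(t) ≤ C sup_{t ≤ τ < ∞} τ^{γ/n-1} ∫₀^τ f*(y) dy`. -/
theorem stmt_17 (n : ℕ) (hn : 0 < n) (γ : ℝ) (hγ0 : 0 < γ) (hγn : γ < n) :
    ∃ C : ℝ≥0∞, 0 < C ∧ C < ⊤ ∧
      ∀ f : (Fin n → ℝ) → ℝ≥0∞, Measurable f →
        (∀ (a : Fin n → ℝ) (h : ℝ), 0 < h → (∫⁻ y in cube17 n a h, f y) < ⊤) →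
        ∀ t : ℝ, 0 < t →
          rearr17 n (fracMax17 n γ f) t
            ≤ C * ⨆ τ : {τ : ℝ // t ≤ τ},
                ENNReal.ofReal τ.1 ^ (γ / n - 1)
                  * ∫⁻ y in Ioc (0 : ℝ) τ.1, rearr17 n f y := by
  classical
  set K : ℝ≥0∞ := (4:ℝ≥0∞) ^ n with hKdef
  have hK1 : (1:ℝ≥0∞) ≤ K := one_le_pow_of_one_le' (by norm_num : (1:ℝ≥0∞) ≤ 4) n
  have hK0 : K ≠ 0 := (lt_of_lt_of_le zero_lt_one hK1).ne'
  have hKtop : K < ⊤ := ENNReal.pow_lt_top (by norm_num)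
  refine ⟨K, lt_of_lt_of_le zero_lt_one hK1, hKtop, ?_⟩
  intro f hf _hfint t ht
  have hn' : (0:ℝ) < n := by exact_mod_cast hn
  set e : ℝ := 1 - γ/n with he
  have he0 : 0 < e := by
    have : γ / n < 1 := (div_lt_one hn').2 hγn
    simp only [he]; linarith
  have he1 : e ≤ 1 := by
    have : 0 ≤ γ / n := by positivity
    simp only [he]; linarith
  have hexp : γ/n - 1 = -e := by simp only [he]; ring
  set S : ℝ≥0∞ := ⨆ τ : {τ : ℝ // t ≤ τ},
      ENNReal.ofReal τ.1 ^ (γ / n - 1) * ∫⁻ y in Ioc (0 : ℝ) τ.1, rearr17 n f y with hSdef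
  have hterm : ∀ τ : ℝ, t ≤ τ →
      ENNReal.ofReal τ ^ (γ/n-1) * ∫⁻ y in Ioc (0:ℝ) τ, rearr17 n f y ≤ S := fun τ hτ =>
    le_iSup (fun p : {τ : ℝ // t ≤ τ} =>
      ENNReal.ofReal p.1 ^ (γ/n-1) * ∫⁻ y in Ioc (0:ℝ) p.1, rearr17 n f y) ⟨τ, hτ⟩
  -- big cubes are controlled by S
  have hbig : ∀ (a : Fin n → ℝ) (h : ℝ), 0 < h → t ≤ h^n →
      (ENNReal.ofReal h ^ (n:ℝ)) ^ (γ/n-1) * ∫⁻ y in cube17 n a h, f y ≤ S := by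
    intro a h hh hth
    have hsn : (0:ℝ) < h^n := pow_pos hh n
    have hvol : volume (cube17 n a h) = ENNReal.ofReal (h^n) := by
      rw [volume_cube17, ← ENNReal.ofReal_pow hh.le]
    have hIle := lemA17 n hf (cube17_measurable n a h) hsn hvol
    have hcoef : (ENNReal.ofReal h ^ (n:ℝ)) = ENNReal.ofReal (h^n) := by
      rw [ENNReal.rpow_natCast, ← ENNReal.ofReal_pow hh.le]
    rw [hcoef]
    exact le_trans (mul_le_mul_right hIle _) (hterm (h^n) hth)
  -- the key claim
  have claim : ∀ l : ℝ≥0∞, K * S < l →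
      volume {x | l < fracMax17 n γ f x} ≤ ENNReal.ofReal t := by
    intro l hl
    have hSl : S < l := lt_of_le_of_lt (le_mul_of_one_le_left zero_le hK1) hl
    by_contra hcon
    rw [not_le] at hcon
    -- witness cubes
    set W : (Fin n → ℝ) × ℝ → ℝ≥0∞ := fun p =>
      (ENNReal.ofReal p.2 ^ (n:ℝ)) ^ (γ/n-1) * ∫⁻ y in cube17 n p.1 p.2, f y with hWdef
    set tset : Set ((Fin n → ℝ) × ℝ) := {p | 0 < p.2 ∧ l < W p} with htsetdef
    have hsmall : ∀ p ∈ tset, p.2 ^ n < t := by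
      intro p hp
      by_contra hge
      rw [not_lt] at hge
      exact absurd hp.2 (not_lt.2 (le_trans (hbig p.1 p.2 hp.1 hge) hSl.le))
    have hrad : ∀ p ∈ tset, p.2 / 2 ≤ max 1 t / 2 := by
      intro p hp
      have hp2 : 0 < p.2 := hp.1
      rcases le_or_gt p.2 1 with h1 | h1
      · have : p.2 ≤ max 1 t := le_trans h1 (le_max_left _ _)
        linarith
      · have h2 : p.2 ≤ p.2 ^ n := le_self_pow₀ h1.le hn.ne'
        have : p.2 ≤ max 1 t := le_trans (h2.trans (hsmall p hp).le) (le_max_right _ _)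
        linarith
    set ctr : (Fin n → ℝ) × ℝ → (Fin n → ℝ) := fun p => fun i => p.1 i + p.2/2 with hctr
    have hcube_ball : ∀ p ∈ tset, cube17 n p.1 p.2 = Metric.closedBall (ctr p) (p.2/2) :=
      fun p hp => cube17_eq_closedBall n p.1 hp.1.le
    have hEsub : {x | l < fracMax17 n γ f x} ⊆ ⋃ p ∈ tset, cube17 n p.1 p.2 := by
      intro x hx
      simp only [mem_setOf_eq, fracMax17, lt_iSup_iff] at hx
      obtain ⟨a, h, ⟨hh, hxc⟩, hW⟩ := hx
      exact mem_biUnion (show ((a,h) : (Fin n → ℝ) × ℝ) ∈ tset from ⟨hh, hW⟩) hxc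
    obtain ⟨u, hut, hdisj, hcover⟩ :=
      Vitali.exists_disjoint_subfamily_covering_enlargement_closedBall tset
        ctr (fun p => p.2/2) (max 1 t / 2) hrad 4 (by norm_num)
    -- countability of u
    have hposvol : ∀ p ∈ tset, 0 < volume (Metric.closedBall (ctr p) (p.2/2)) := by
      intro p hp
      rw [← hcube_ball p hp, volume_cube17]
      rw [pos_iff_ne_zero]
      exact pow_ne_zero n (ENNReal.ofReal_pos.2 hp.1).ne'
    have hu_count : u.Countable := by
      have hc := MeasureTheory.Measure.countable_meas_pos_of_disjoint_iUnion
        (μ := (volume : Measure (Fin n → ℝ)))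
        (As := fun b : u => Metric.closedBall (ctr b.1) (b.1.2/2))
        (fun b => Metric.isClosed_closedBall.measurableSet)
        (fun i j hij => hdisj i.2 j.2 (fun hh => hij (Subtype.ext hh)))
      have huniv : {b : u | 0 < volume (Metric.closedBall (ctr b.1) (b.1.2/2))} = univ := by
        ext b; simpa using hposvol b.1 (hut b.2)
      rw [huniv, Set.countable_univ_iff] at hc
      exact Set.countable_coe_iff.1 hc
    -- covering estimate
    have hcov2 : {x | l < fracMax17 n γ f x} ⊆ ⋃ b ∈ u, Metric.closedBall (ctr b) (4 * (b.2/2)) := by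
      intro x hx
      obtain ⟨p, hp, hxp⟩ := mem_iUnion₂.1 (hEsub hx)
      rw [hcube_ball p hp] at hxp
      obtain ⟨b, hb, hsub⟩ := hcover p hp
      exact mem_biUnion hb (hsub hxp)
    have hvolE : ENNReal.ofReal t < ∑' b : u, K * volume (cube17 n b.1.1 b.1.2) := by
      refine lt_of_lt_of_le hcon ?_
      refine le_trans (measure_mono hcov2) ?_
      refine le_trans (measure_biUnion_le volume hu_count _) ?_
      refine ENNReal.tsum_le_tsum fun b => ?_
      have hb2 : 0 ≤ b.1.2 := (hut b.2).1.le
      rw [volume_big_ball n (ctr b.1) hb2, volume_cube17]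
    -- extract finite subfamily
    rw [ENNReal.tsum_mul_left, ENNReal.tsum_eq_iSup_sum, ENNReal.mul_iSup, lt_iSup_iff] at hvolE
    obtain ⟨F, hF⟩ := hvolE
    set σF : ℝ≥0∞ := ∑ b ∈ F, volume (cube17 n b.1.1 b.1.2) with hσFdef
    have hσF_top : σF ≠ ⊤ := by
      refine (ENNReal.sum_lt_top.2 fun b _ => ?_).ne
      rw [volume_cube17]
      exact ENNReal.pow_lt_top ENNReal.ofReal_lt_top
    have hσF_pos : 0 < σF := by
      by_contra h0
      rw [not_lt, le_zero_iff] at h0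
      rw [h0, mul_zero] at hF
      exact absurd hF (by simp [le_zero_iff, ENNReal.ofReal_pos.2 ht])
      -- ofReal t < 0 impossible
    set s : ℝ := σF.toReal with hsdef
    have hs_pos : 0 < s := ENNReal.toReal_pos hσF_pos.ne' hσF_top
    have hofs : ENNReal.ofReal s = σF := ENNReal.ofReal_toReal hσF_top
    -- disjointness of the cubes in F
    have hFdisj : (↑F : Set u).PairwiseDisjoint fun b : u => cube17 n b.1.1 b.1.2 := by
      intro i _ j _ hij
      have hd := hdisj i.2 j.2 (fun hh : (i : (Fin n → ℝ) × ℝ) = j => hij (Subtype.ext hh))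
      simp only [Function.onFun] at hd ⊢
      rwa [hcube_ball _ (hut i.2), hcube_ball _ (hut j.2)]
    have hVvol : volume (⋃ b ∈ F, cube17 n b.1.1 b.1.2) = σF :=
      measure_biUnion_finset hFdisj fun b _ => cube17_measurable n b.1.1 b.1.2
    have hVmeas : MeasurableSet (⋃ b ∈ F, cube17 n b.1.1 b.1.2) :=
      F.measurableSet_biUnion fun b _ => cube17_measurable n b.1.1 b.1.2
    have hVle : ∫⁻ x in (⋃ b ∈ F, cube17 n b.1.1 b.1.2), f x
        ≤ ∫⁻ y in Ioc (0:ℝ) s, rearr17 n f y :=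
      lemA17 n hf hVmeas hs_pos (hVvol.trans hofs.symm)
    have hsum_int : ∑ b ∈ F, ∫⁻ x in cube17 n b.1.1 b.1.2, f x
        = ∫⁻ x in (⋃ b ∈ F, cube17 n b.1.1 b.1.2), f x :=
      (lintegral_biUnion_finset hFdisj (fun b _ => cube17_measurable n b.1.1 b.1.2) f).symm
    -- per-cube estimate
    have hper : ∀ b : u, b ∈ F → l * (volume (cube17 n b.1.1 b.1.2)) ^ e
        ≤ ∫⁻ x in cube17 n b.1.1 b.1.2, f x := by
      intro b _
      have hb := hut b.2
      have hb2 : 0 < b.1.2 := hb.1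
      set v : ℝ≥0∞ := volume (cube17 n b.1.1 b.1.2) with hv
      have hv_eq : v = ENNReal.ofReal b.1.2 ^ (n:ℝ) := by
        rw [hv, volume_cube17, ENNReal.rpow_natCast]
      have hv0 : v ≠ 0 := by
        rw [hv, volume_cube17]
        exact pow_ne_zero n (ENNReal.ofReal_pos.2 hb2).ne'
      have hvtop : v ≠ ⊤ := by
        rw [hv, volume_cube17]
        exact (ENNReal.pow_lt_top ENNReal.ofReal_lt_top).ne
      have hWb : l < v ^ (-e) * ∫⁻ x in cube17 n b.1.1 b.1.2, f x := by
        have := hb.2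
        rw [hWdef] at this
        simp only at this
        rwa [hexp, ← hv_eq] at this
      calc l * v ^ e ≤ (v ^ (-e) * ∫⁻ x in cube17 n b.1.1 b.1.2, f x) * v ^ e :=
            mul_le_mul_left hWb.le _
        _ = (v ^ (-e) * v ^ e) * ∫⁻ x in cube17 n b.1.1 b.1.2, f x := by ring
        _ = ∫⁻ x in cube17 n b.1.1 b.1.2, f x := by
            rw [← ENNReal.rpow_add _ _ hv0 hvtop, neg_add_cancel, ENNReal.rpow_zero, one_mul]
    -- combine
    have hmain : l * σF ^ e ≤ ∫⁻ y in Ioc (0:ℝ) s, rearr17 n f y := by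
      calc l * σF ^ e ≤ l * ∑ b ∈ F, (volume (cube17 n b.1.1 b.1.2)) ^ e :=
            mul_le_mul_right (rpow_sum_le17 F _ he0 he1) l
        _ = ∑ b ∈ F, l * (volume (cube17 n b.1.1 b.1.2)) ^ e := Finset.mul_sum _ _ _
        _ ≤ ∑ b ∈ F, ∫⁻ x in cube17 n b.1.1 b.1.2, f x := Finset.sum_le_sum hper
        _ = ∫⁻ x in (⋃ b ∈ F, cube17 n b.1.1 b.1.2), f x := hsum_int
        _ ≤ _ := hVle
    have hl_le : l ≤ σF ^ (-e) * ∫⁻ y in Ioc (0:ℝ) s, rearr17 n f y := by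
      have h1 : l = (l * σF ^ e) * σF ^ (-e) := by
        rw [mul_assoc, ← ENNReal.rpow_add _ _ hσF_pos.ne' hσF_top, add_neg_cancel,
          ENNReal.rpow_zero, mul_one]
      rw [h1, mul_comm (σF ^ (-e))]
      exact mul_le_mul_left hmain _
    -- two cases
    rcases le_or_gt (ENNReal.ofReal t) σF with hcase | hcase
    · -- big total: directly bounded by S
      have hts : t ≤ s := by
        have := ENNReal.toReal_mono hσF_top hcase
        rwa [ENNReal.toReal_ofReal ht.le] at this
      have : l ≤ S := by
        refine le_trans hl_le ?_
        rw [← hofs, ← hexp]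
        exact hterm s hts
      exact absurd (lt_of_le_of_lt this hSl) (lt_irrefl l)
    · -- small total
      have hst : s < t := by
        have := ENNReal.toReal_strict_mono ENNReal.ofReal_ne_top hcase
        rwa [ENNReal.toReal_ofReal ht.le] at this
      have hge : ENNReal.ofReal t / K ≤ σF := by
        refine ENNReal.div_le_of_le_mul ?_
        rw [mul_comm] at hF
        exact hF.le
      have hmono : σF ^ (-e) ≤ (ENNReal.ofReal t / K) ^ (-e) := by
        rw [ENNReal.rpow_neg, ENNReal.rpow_neg]
        exact ENNReal.inv_le_inv.2 (ENNReal.rpow_le_rpow hge he0.le)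
      have hsplit : (ENNReal.ofReal t / K) ^ (-e) ≤ K * ENNReal.ofReal t ^ (-e) := by
        rw [div_eq_mul_inv, ENNReal.mul_rpow_of_ne_top ENNReal.ofReal_ne_top
          (ENNReal.inv_ne_top.2 hK0), ENNReal.inv_rpow, ENNReal.rpow_neg K, inv_inv]
        rw [mul_comm]
        refine mul_le_mul_left ?_ _
        calc K ^ e ≤ K ^ (1:ℝ) := ENNReal.rpow_le_rpow_of_exponent_le hK1 he1
          _ = K := ENNReal.rpow_one K
      have hJ : ∫⁻ y in Ioc (0:ℝ) s, rearr17 n f y ≤ ∫⁻ y in Ioc (0:ℝ) t, rearr17 n f y :=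
        lintegral_mono_set (Ioc_subset_Ioc_right hst.le)
      have : l ≤ K * S := by
        calc l ≤ σF ^ (-e) * ∫⁻ y in Ioc (0:ℝ) s, rearr17 n f y := hl_le
          _ ≤ (K * ENNReal.ofReal t ^ (-e)) * ∫⁻ y in Ioc (0:ℝ) t, rearr17 n f y :=
              mul_le_mul' (le_trans hmono hsplit) hJ
          _ = K * (ENNReal.ofReal t ^ (γ/n-1) * ∫⁻ y in Ioc (0:ℝ) t, rearr17 n f y) := by
              rw [hexp, mul_assoc]
          _ ≤ K * S := mul_le_mul_right (hterm t le_rfl) K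
      exact absurd (lt_of_le_of_lt this hl) (lt_irrefl l)
  -- conclude
  rcases eq_or_ne (K * S) ⊤ with htop | htop
  · rw [htop]; exact le_top
  by_contra hcontra
  rw [not_le] at hcontra
  obtain ⟨l, hl1, hl2⟩ := exists_between hcontra
  have hmem : rearr17 n (fracMax17 n γ f) t ≤ l := by
    unfold rearr17
    exact sInf_le (claim l hl1)
  exact absurd hmem (not_le.2 hl2)
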